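/- arXiv:1507.05392 — 2 statements merged into one kernel-verified Lean document; each statement's English description precedes it below -/
import Mathlib

section
/- Let Ω ⊂ ℝ^N be a bounded smooth domain, 2 ≤ q < p, a, b, λ, μ > 0, and let u_α be a positive solution of -Δu = α u^{q-1} + u^{p-1} in Ω with zero boundary values. Set T = ∫_Ω |∇u_α|² dx and s = (λ/(α μ^{(q-2)/(p-2)}))^{1/(p-q)}. Then the function φ = s · μ^{1/(2-p)} u_α solves -(a + b ∫_Ω |∇φ|² dx) Δφ = λ φ^{q-1} + μ φ^{p-1} in Ω if and only if a (α μ^{(q-2)/(p-2)}/λ)^{(p-2)/(p-q)} + b (α μ^{(q-2)/(p-2)}/λ)^{(p-4)/(p-q)} μ^{2/(2-p)} T = 1. -/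
open Real MeasureTheory Filter Topology Set Bornology

/-- The Laplacian of a function on Euclidean space. -/
noncomputable def lap {N : ℕ} (u : EuclideanSpace ℝ (Fin N) → ℝ)
    (x : EuclideanSpace ℝ (Fin N)) : ℝ :=
  ∑ i : Fin N, fderiv ℝ (fun y => fderiv ℝ u y (EuclideanSpace.single i 1)) x
    (EuclideanSpace.single i 1)

lemma gradient_cmul {N : ℕ} (c : ℝ) (u : EuclideanSpace ℝ (Fin N) → ℝ)
    (hreg : ContDiff ℝ 2 u) (x : EuclideanSpace ℝ (Fin N)) :
    gradient (fun y => c * u y) x = c • gradient u x := by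
  unfold gradient
  rw [fderiv_const_mul (hreg.differentiable (by norm_num) x), _root_.map_smul]

lemma lap_cmul {N : ℕ} (c : ℝ) (u : EuclideanSpace ℝ (Fin N) → ℝ)
    (hreg : ContDiff ℝ 2 u) (x : EuclideanSpace ℝ (Fin N)) :
    lap (fun y => c * u y) x = c * lap u x := by
  unfold lap
  rw [Finset.mul_sum]
  refine Finset.sum_congr rfl fun i _ => ?_
  have hd : ∀ v, Differentiable ℝ (fun y => fderiv ℝ u y v) := fun v =>
    ((hreg.fderiv_right (m := 1) (by norm_num)).clm_apply contDiff_const).differentiable one_ne_zero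
  have h1 : (fun y => fderiv ℝ (fun z => c * u z) y (EuclideanSpace.single i 1))
      = fun y => c * fderiv ℝ u y (EuclideanSpace.single i 1) := by
    funext y
    rw [fderiv_const_mul (hreg.differentiable (by norm_num) y)]
    simp
  rw [h1, fderiv_const_mul (hd _ x)]
  simp

/-- Proposition 1.1 of the paper: with `T = ∫_Ω |∇u_α|²` and
`s = (λ/(α μ^((q-2)/(p-2))))^(1/(p-q))`, the function `φ = s μ^(1/(2-p)) u_α`
solves the Kirchhoff problem iff
`a (αμ^((q-2)/(p-2))/λ)^((p-2)/(p-q)) + b (αμ^((q-2)/(p-2))/λ)^((p-4)/(p-q)) μ^(2/(2-p)) T = 1`. -/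
theorem stmt1 {N : ℕ} (hN : 1 ≤ N) (Ω : Set (EuclideanSpace ℝ (Fin N)))
    (hΩo : IsOpen Ω) (hΩb : IsBounded Ω) (hΩne : Ω.Nonempty)
    (q p a b lam μ α : ℝ) (hq : 2 ≤ q) (hqp : q < p)
    (ha : 0 < a) (hb : 0 < b) (hlam : 0 < lam) (hμ : 0 < μ) (hα : 0 < α)
    (u : EuclideanSpace ℝ (Fin N) → ℝ) (hreg : ContDiff ℝ 2 u)
    (hupos : ∀ x ∈ Ω, 0 < u x)
    (hPDE : ∀ x ∈ Ω, -lap u x = α * u x ^ (q - 1) + u x ^ (p - 1))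
    (hbd : ∀ x ∈ frontier Ω, u x = 0)
    (T : ℝ) (hT : T = ∫ x in Ω, ‖gradient u x‖ ^ 2)
    (s : ℝ) (hs : s = (lam / (α * μ ^ ((q - 2) / (p - 2)))) ^ ((1 : ℝ) / (p - q)))
    (φ : EuclideanSpace ℝ (Fin N) → ℝ)
    (hφ : φ = fun x => s * (μ ^ ((1 : ℝ) / (2 - p)) * u x)) :
    (∀ x ∈ Ω,
        -((a + b * ∫ y in Ω, ‖gradient φ y‖ ^ 2) * lap φ x) =
          lam * φ x ^ (q - 1) + μ * φ x ^ (p - 1)) ↔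
      a * (α * μ ^ ((q - 2) / (p - 2)) / lam) ^ ((p - 2) / (p - q)) +
          b * (α * μ ^ ((q - 2) / (p - 2)) / lam) ^ ((p - 4) / (p - q)) *
            μ ^ (2 / (2 - p)) * T = 1 := by
  have hp2 : (0:ℝ) < p - 2 := by linarith
  have hpq : (0:ℝ) < p - q := by linarith
  have h2p : (2:ℝ) - p ≠ 0 := by linarith
  set A := α * μ ^ ((q - 2) / (p - 2)) with hA
  have hApos : 0 < A := mul_pos hα (rpow_pos_of_pos hμ _)
  have hdiv : 0 < lam / A := div_pos hlam hApos
  have hspos : 0 < s := hs ▸ rpow_pos_of_pos hdiv _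
  set c := s * μ ^ ((1:ℝ)/(2-p)) with hc
  have hcpos : 0 < c := mul_pos hspos (rpow_pos_of_pos hμ _)
  have hφ' : φ = fun x => c * u x := by
    funext x; rw [hφ]; ring
  have hMpos : 0 < s ^ (p - 2) := rpow_pos_of_pos hspos _
  -- s^r expressed via lam/A
  have hsE : ∀ r : ℝ, s ^ r = (lam / A) ^ (r / (p - q)) := by
    intro r
    rw [hs, ← Real.rpow_mul hdiv.le]
    congr 1
    field_simp
  -- key identities
  have h1 : μ * c ^ (p - 2) = s ^ (p - 2) := by
    have e1 : ((1:ℝ)/(2-p)) * (p-2) = -1 := by field_simp; ring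
    rw [hc, Real.mul_rpow hspos.le (rpow_pos_of_pos hμ _).le,
      ← Real.rpow_mul hμ.le, e1, Real.rpow_neg_one]
    field_simp
  have h2 : lam * c ^ (q - 2) = α * s ^ (p - 2) := by
    have e1 : ((1:ℝ)/(2-p)) * (q-2) = -((q-2)/(p-2)) := by field_simp; ring
    have e2 : s ^ (p - 2) = s ^ (q - 2) * s ^ (p - q) := by
      rw [← Real.rpow_add hspos]; ring_nf
    have e3 : s ^ (p - q) = lam / A := by
      rw [hsE (p - q), div_self hpq.ne', Real.rpow_one]
    rw [hc, Real.mul_rpow hspos.le (rpow_pos_of_pos hμ _).le,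
      ← Real.rpow_mul hμ.le, e1, Real.rpow_neg hμ.le, e2, e3, hA]
    field_simp
  have h3 : (A / lam) ^ ((p-2)/(p-q)) = (s ^ (p - 2))⁻¹ := by
    rw [show A / lam = (lam / A)⁻¹ by rw [inv_div], Real.inv_rpow hdiv.le, ← hsE]
  have h4 : (A / lam) ^ ((p-4)/(p-q)) = (s ^ (p - 4))⁻¹ := by
    rw [show A / lam = (lam / A)⁻¹ by rw [inv_div], Real.inv_rpow hdiv.le, ← hsE]
  have hc2 : c ^ 2 = μ ^ ((2:ℝ)/(2-p)) * (s * s) := by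
    have h : μ ^ ((2:ℝ)/(2-p)) = μ ^ ((1:ℝ)/(2-p)) * μ ^ ((1:ℝ)/(2-p)) := by
      rw [← Real.rpow_add hμ]; ring_nf
    rw [hc, h]; ring
  have hss : s * s = s ^ (p-2) * (s ^ (p-4))⁻¹ := by
    rw [← Real.rpow_neg hspos.le, ← Real.rpow_add hspos,
      show (p-2) + -(p-4) = (2:ℝ) by ring,
      show (2:ℝ) = ((2:ℕ):ℝ) by norm_num, Real.rpow_natCast]
    ring
  -- the integral
  have hgrad : ∀ y, ‖gradient φ y‖ ^ 2 = c ^ 2 * ‖gradient u y‖ ^ 2 := by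
    intro y
    rw [hφ', gradient_cmul c u hreg, norm_smul, mul_pow, Real.norm_eq_abs, sq_abs]
  have hint : (∫ y in Ω, ‖gradient φ y‖ ^ 2) = c ^ 2 * T := by
    rw [hT]
    simp_rw [hgrad]
    rw [integral_const_mul]
  -- pointwise identities
  have hpt : ∀ x ∈ Ω, lam * φ x ^ (q-1) + μ * φ x ^ (p-1)
      = s ^ (p-2) * (c * (α * u x ^ (q-1) + u x ^ (p-1))) := by
    intro x hx
    have hu := hupos x hx
    have e1 : c ^ (q-1) = c ^ (q-2) * c := by
      rw [show q-1 = (q-2)+1 by ring, Real.rpow_add hcpos, Real.rpow_one]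
    have e2 : c ^ (p-1) = c ^ (p-2) * c := by
      rw [show p-1 = (p-2)+1 by ring, Real.rpow_add hcpos, Real.rpow_one]
    rw [hφ']
    simp only
    rw [Real.mul_rpow hcpos.le hu.le, Real.mul_rpow hcpos.le hu.le, e1, e2]
    linear_combination (c * u x ^ (q-1)) * h2 + (c * u x ^ (p-1)) * h1
  have hlhs : ∀ x ∈ Ω,
      -((a + b * ∫ y in Ω, ‖gradient φ y‖ ^ 2) * lap φ x)
        = (a + b * (c ^ 2 * T)) * (c * (α * u x ^ (q-1) + u x ^ (p-1))) := by
    intro x hx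
    rw [hint, hφ', lap_cmul c u hreg]
    linear_combination ((a + b * (c ^ 2 * T)) * c) * (hPDE x hx)
  -- scalar side reformulation
  have hMne : s ^ (p - 2) ≠ 0 := hMpos.ne'
  have hMne4 : s ^ (p - 4) ≠ 0 := (rpow_pos_of_pos hspos _).ne'
  have hEq : a * (A / lam) ^ ((p - 2) / (p - q)) +
      b * (A / lam) ^ ((p - 4) / (p - q)) * μ ^ (2 / (2 - p)) * T
      = (a + b * (c ^ 2 * T)) / s ^ (p - 2) := by
    rw [h3, h4, hc2, hss]
    field_simp
  rw [hEq, div_eq_iff hMne, one_mul]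
  constructor
  · intro h
    obtain ⟨x₀, hx₀⟩ := hΩne
    have hu := hupos x₀ hx₀
    have hX : 0 < c * (α * u x₀ ^ (q-1) + u x₀ ^ (p-1)) := by positivity
    have key : (a + b * (c ^ 2 * T)) * (c * (α * u x₀ ^ (q-1) + u x₀ ^ (p-1)))
        = s ^ (p-2) * (c * (α * u x₀ ^ (q-1) + u x₀ ^ (p-1))) :=
      (hlhs x₀ hx₀).symm.trans ((h x₀ hx₀).trans (hpt x₀ hx₀))
    exact mul_right_cancel₀ hX.ne' key
  · intro h x hx
    calc -((a + b * ∫ y in Ω, ‖gradient φ y‖ ^ 2) * lap φ x)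
        = (a + b * (c ^ 2 * T)) * (c * (α * u x ^ (q-1) + u x ^ (p-1))) := hlhs x hx
      _ = s ^ (p-2) * (c * (α * u x ^ (q-1) + u x ^ (p-1))) := by rw [h]
      _ = lam * φ x ^ (q-1) + μ * φ x ^ (p-1) := (hpt x hx).symm
end

section
/- Let 2 < p < 4, a, b, λ, μ, C > 0 and define g(α) = (a/λ) α + b C (α/λ)^{(p-4)/(p-2)} μ^{2/(2-p)} for α > 0. If (2/((p-2)μ)) ((p-2)a/(4-p))^{(4-p)/2} (bC)^{(p-2)/2} < 1, then there exists α* > 0 with g(α*) < 1; moreover g(α) → +∞ both as α → 0⁺ and as α → +∞. -/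
open Real Filter Topology Set

/-- quantitative condition from Theorem 1.3(2): if
`(2/((p-2)μ)) ((p-2)a/(4-p))^((4-p)/2) (bC)^((p-2)/2) < 1` then the comparison function
`g(α) = (a/λ)α + bC(α/λ)^((p-4)/(p-2)) μ^(2/(2-p))` dips below `1` at some `α* > 0`;
moreover `g → +∞` as `α → 0⁺` and as `α → +∞`. -/
theorem stmt5 (p a b lam μ C : ℝ) (hp : 2 < p) (hp4 : p < 4)
    (ha : 0 < a) (hb : 0 < b) (hlam : 0 < lam) (hμ : 0 < μ) (hC : 0 < C)
    (g : ℝ → ℝ)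
    (hg : g = fun α =>
      a / lam * α + b * C * (α / lam) ^ ((p - 4) / (p - 2)) * μ ^ (2 / (2 - p)))
    (hcond : 2 / ((p - 2) * μ) * ((p - 2) * a / (4 - p)) ^ ((4 - p) / 2) *
        (b * C) ^ ((p - 2) / 2) < 1) :
    (∃ α : ℝ, 0 < α ∧ g α < 1) ∧
      Tendsto g (nhdsWithin 0 (Set.Ioi 0)) atTop ∧
      Tendsto g atTop atTop := by
  have hp2 : (0:ℝ) < p - 2 := by linarith
  have h4p : (0:ℝ) < 4 - p := by linarith
  set m : ℝ := 2 / (2 - p) with hm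
  set κ : ℝ := (p - 4) / (p - 2) with hκ
  have hκneg : κ < 0 := div_neg_of_neg_of_pos (by linarith) hp2
  have hμm : 0 < μ ^ m := rpow_pos_of_pos hμ m
  have hbC : 0 < b * C := mul_pos hb hC
  refine ⟨?_, ?_, ?_⟩
  · -- existence of α with g α < 1
    set Y : ℝ := (p - 2) * a / (4 - p) with hY
    have hYpos : 0 < Y := div_pos (mul_pos hp2 ha) h4p
    set X : ℝ := b * C * μ ^ m / Y with hX
    have hXpos : 0 < X := div_pos (mul_pos hbC hμm) hYpos
    set k : ℝ := (p - 2) / 2 with hk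
    set t : ℝ := X ^ k with ht
    have htpos : 0 < t := rpow_pos_of_pos hXpos k
    refine ⟨lam * t, mul_pos hlam htpos, ?_⟩
    have hsimp : lam * t / lam = t := by field_simp
    -- t ^ κ = t / X
    have hkκ : k * κ = k + (-1) := by
      rw [hk, hκ]; field_simp; ring
    have htκ : t ^ κ = t / X := by
      rw [ht, ← Real.rpow_mul hXpos.le, hkκ, Real.rpow_add hXpos, Real.rpow_neg_one,
        div_eq_mul_inv]
    -- the value of g at lam * t
    have h1 : a / lam * (lam * t) = a * t := by field_simp
    have h2 : b * C * t ^ κ * μ ^ m = Y * t := by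
      rw [htκ, hX]
      field_simp
    have hgoal : g (lam * t) = a * t + Y * t := by
      rw [hg]
      simp only
      rw [hsimp, h1, h2]
    rw [hgoal]
    -- now show a * t + Y * t equals the LHS of hcond
    have h2p : (2:ℝ) - p ≠ 0 := by linarith
    have hmk : m * k = -1 := by rw [hm, hk]; field_simp; ring
    have hμmk : (μ ^ m) ^ k = μ⁻¹ := by
      rw [← Real.rpow_mul hμ.le, hmk, Real.rpow_neg_one]
    have htX : t = (b * C) ^ k * μ⁻¹ / Y ^ k := by
      rw [ht, hX, Real.div_rpow (by positivity) hYpos.le,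
        Real.mul_rpow hbC.le hμm.le, hμmk]
    have hY4p : Y ^ ((4 - p) / 2) = Y / Y ^ k := by
      rw [show (4 - p) / 2 = 1 + (-k) by rw [hk]; ring, Real.rpow_add hYpos,
        Real.rpow_one, Real.rpow_neg hYpos.le, div_eq_mul_inv]
    have ha' : a = Y * (4 - p) / (p - 2) := by rw [hY]; field_simp
    have hYk : (0:ℝ) < Y ^ k := rpow_pos_of_pos hYpos k
    have hbCk : (0:ℝ) < (b * C) ^ k := rpow_pos_of_pos hbC k
    have hEq : a * t + Y * t = 2 / ((p - 2) * μ) * Y ^ ((4 - p) / 2) * (b * C) ^ k := by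
      rw [htX, hY4p, ha']
      field_simp
      ring
    rw [hEq]
    exact hcond
  · -- limit at 0⁺
    have h1 : Tendsto (fun α : ℝ => α / lam) (𝓝[>] (0:ℝ)) (𝓝[>] (0:ℝ)) := by
      rw [tendsto_nhdsWithin_iff]
      constructor
      · have : Tendsto (fun α : ℝ => α / lam) (𝓝 (0:ℝ)) (𝓝 (0 / lam)) :=
          tendsto_id.div_const lam
        rw [zero_div] at this
        exact this.mono_left nhdsWithin_le_nhds
      · filter_upwards [self_mem_nhdsWithin] with x hx
        exact div_pos hx hlam
    have h2 : Tendsto (fun x : ℝ => x ^ κ) (𝓝[>] (0:ℝ)) atTop := by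
      have h := (tendsto_rpow_atTop (y := -κ) (by linarith)).comp tendsto_inv_nhdsGT_zero
      apply h.congr'
      filter_upwards [self_mem_nhdsWithin] with x hx
      simp only [Function.comp_apply]
      rw [← Real.rpow_neg_one x, ← Real.rpow_mul (le_of_lt hx),
        show (-1:ℝ) * -κ = κ by ring]
    have h3 : Tendsto (fun α : ℝ => b * C * (α / lam) ^ κ * μ ^ m) (𝓝[>] (0:ℝ)) atTop :=
      Tendsto.atTop_mul_const hμm ((h2.comp h1).const_mul_atTop hbC)
    rw [hg]
    refine tendsto_atTop_add_left_of_le' _ 0 ?_ h3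
    filter_upwards [self_mem_nhdsWithin] with x hx
    exact mul_nonneg (by positivity) (le_of_lt hx)
  · -- limit at +∞
    rw [hg]
    refine tendsto_atTop_add_right_of_le' _ 0 ?_ ?_
    · exact tendsto_id.const_mul_atTop (div_pos ha hlam)
    · filter_upwards [eventually_ge_atTop (0:ℝ)] with x hx
      exact mul_nonneg (mul_nonneg hbC.le (Real.rpow_nonneg (div_nonneg hx hlam.le) _))
        (Real.rpow_nonneg hμ.le _)
end
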